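/- Let f(x) = x^3 - α x + β with α > 0 and 4|β| ≤ α^{3/2}. Then every real root x of f(x) = 0 satisfies |x| ≤ 2|β|/α, or |x - √α| ≤ 2|β|/α, or |x + √α| ≤ 2|β|/α. -/
import Mathlib

/-- nearest point is 0 -/
lemma aux0 (α β x s : ℝ) (hα : 0 < α) (hs0 : 0 < s) (hs2 : s ^ 2 = α)
    (key : |x| * |x - s| * |x + s| = |β|)
    (h1 : |x| ≤ |x - s|) (h2 : |x| ≤ |x + s|) : |x| ≤ 2 * |β| / α := by
  have hx1 : x * x ≤ (x - s) * (x - s) := by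
    have := mul_self_le_mul_self (abs_nonneg x) h1
    simpa [abs_mul_abs_self] using this
  have hx2 : x * x ≤ (x + s) * (x + s) := by
    have := mul_self_le_mul_self (abs_nonneg x) h2
    simpa [abs_mul_abs_self] using this
  have hxu : x ≤ s / 2 := by nlinarith
  have hxl : -(s / 2) ≤ x := by nlinarith
  have hq : x ^ 2 ≤ α / 4 := by nlinarith
  have hprod : |x - s| * |x + s| = α - x ^ 2 := by
    rw [← abs_mul, show (x - s) * (x + s) = x ^ 2 - s ^ 2 by ring, hs2,
      abs_of_nonpos (by nlinarith)]
    ring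
  have key' : |x| * (α - x ^ 2) = |β| := by
    rw [← hprod, ← mul_assoc]; exact key
  rw [le_div_iff₀ hα]
  nlinarith [abs_nonneg x, mul_nonneg (abs_nonneg x) (show (0:ℝ) ≤ α - 2 * x ^ 2 by nlinarith)]

/-- nearest point is -s -/
lemma auxm (α β x s : ℝ) (hα : 0 < α) (hs0 : 0 < s) (hs2 : s ^ 2 = α)
    (key : |x| * |x - s| * |x + s| = |β|)
    (h1 : |x + s| ≤ |x|) (h2 : |x + s| ≤ |x - s|) : |x + s| ≤ 2 * |β| / α := by
  have hx1 : (x + s) * (x + s) ≤ x * x := by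
    have := mul_self_le_mul_self (abs_nonneg (x + s)) h1
    simpa [abs_mul_abs_self] using this
  have hx : x ≤ -(s / 2) := by nlinarith
  have ha1 : |x| = -x := abs_of_nonpos (by nlinarith)
  have ha2 : |x - s| = s - x := by rw [abs_of_nonpos (by nlinarith)]; ring
  have key' : (-x) * (s - x) * |x + s| = |β| := by rw [← ha1, ← ha2]; exact key
  have hbig : α ≤ 2 * ((-x) * (s - x)) - α / 2 := by nlinarith
  rw [le_div_iff₀ hα]
  nlinarith [abs_nonneg (x + s),
    mul_nonneg (abs_nonneg (x + s)) (show (0:ℝ) ≤ 2 * ((-x) * (s - x)) - α by nlinarith)]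

/-- Roots of the cubic `x^3 - α x + β` with `α > 0` and `4|β| ≤ α^{3/2}`
lie near `0`, `√α` or `-√α`. -/
theorem stmt_0 (α β x : ℝ) (hα : 0 < α) (hβ : 4 * |β| ≤ α ^ ((3 : ℝ) / 2))
    (hroot : x ^ 3 - α * x + β = 0) :
    |x| ≤ 2 * |β| / α ∨ |x - Real.sqrt α| ≤ 2 * |β| / α ∨
      |x + Real.sqrt α| ≤ 2 * |β| / α := by
  set s := Real.sqrt α with hs
  have hs0 : 0 < s := Real.sqrt_pos.mpr hα
  have hs2 : s ^ 2 = α := Real.sq_sqrt hα.le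
  have key : |x| * |x - s| * |x + s| = |β| := by
    rw [← abs_mul, ← abs_mul, ← abs_neg β]
    congr 1
    linear_combination hroot - x * hs2
  -- symmetric version for the point `s`, using `-x`
  have keyn : |(-x)| * |(-x) - s| * |(-x) + s| = |β| := by
    rw [show |(-x)| = |x| by rw [abs_neg],
      show |(-x) - s| = |x + s| by rw [show (-x) - s = -(x + s) by ring, abs_neg],
      show |(-x) + s| = |x - s| by rw [show (-x) + s = -(x - s) by ring, abs_neg]]
    linarith [key, mul_right_comm |x| |x - s| |x + s|]
  rcases le_or_gt |x| |x - s| with h01 | h01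
  · rcases le_or_gt |x| |x + s| with h02 | h02
    · exact Or.inl (aux0 α β x s hα hs0 hs2 key h01 h02)
    · exact Or.inr (Or.inr (auxm α β x s hα hs0 hs2 key h02.le (h02.le.trans h01)))
  · rcases le_or_gt |x - s| |x + s| with h12 | h12
    · refine Or.inr (Or.inl ?_)
      have := auxm α β (-x) s hα hs0 hs2 keyn
        (by rw [show (-x) + s = -(x - s) by ring, abs_neg, abs_neg]; exact h01.le)
        (by rw [show (-x) + s = -(x - s) by ring, abs_neg,
              show (-x) - s = -(x + s) by ring, abs_neg]; exact h12)
      rwa [show (-x) + s = -(x - s) by ring, abs_neg] at this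
    · exact Or.inr (Or.inr (auxm α β x s hα hs0 hs2 key (h12.le.trans h01.le) h12.le))
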